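/- In the affine Temperley–Lieb algebra aTL_{N₁+N₂}(m) with m = q + q^{-1}, the images u⁽¹⁾ = u g_{N-1}^{-1} ⋯ g_{N₁}^{-1} and u⁽²⁾ = g_{N₁} ⋯ g_1 u (with N = N₁+N₂ and g_i = i(q^{1/2} − q^{-1/2}e_i)) commute: u⁽¹⁾ u⁽²⁾ = u⁽²⁾ u⁽¹⁾. -/

import Mathlib

private lemma aTL_prod_congr {A : Type*} [Monoid A] (k : ℕ) (f f' : ℕ → A)
    (h : ∀ t < k, f t = f' t) :
    ((List.range k).map f).prod = ((List.range k).map f').prod := by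
  congr 1
  exact List.map_congr_left fun t ht => h t (List.mem_range.mp ht)

private lemma aTL_split_last {A : Type*} [Monoid A] (n : ℕ) (f : ℕ → A) :
    ((List.range (n + 1)).map f).prod = ((List.range n).map f).prod * f n := by
  rw [List.range_succ]; simp

private lemma aTL_split_first {A : Type*} [Monoid A] (n : ℕ) (f : ℕ → A) :
    ((List.range (n + 1)).map f).prod
      = f 0 * ((List.range n).map (fun t => f (t + 1))).prod := by
  rw [List.range_succ_eq_map]
  simp only [List.map_cons, List.prod_cons, List.map_map]
  rfl

private lemma aTL_shift {A : Type*} [Monoid A] (u : A) (k : ℕ) (f f' : ℕ → A)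
    (h : ∀ t < k, f t * u = u * f' t) :
    ((List.range k).map f).prod * u = u * ((List.range k).map f').prod := by
  induction k with
  | zero => simp
  | succ n ih =>
    rw [aTL_split_last, aTL_split_last, mul_assoc, h n (by omega), ← mul_assoc,
      ih (fun t ht => h t (by omega)), mul_assoc]

private lemma aTL_comm_chains {A : Type*} [Monoid A] (k l : ℕ) (f h : ℕ → A)
    (hc : ∀ s < k, ∀ t < l, Commute (f s) (h t)) :
    ((List.range k).map f).prod * ((List.range l).map h).prod
      = ((List.range l).map h).prod * ((List.range k).map f).prod := by
  refine Commute.list_prod_left _ _ fun x hx => ?_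
  obtain ⟨s, hs, rfl⟩ := List.mem_map.mp hx
  refine Commute.list_prod_right _ _ fun y hy => ?_
  obtain ⟨t, ht, rfl⟩ := List.mem_map.mp hy
  exact hc s (List.mem_range.mp hs) t (List.mem_range.mp ht)

/-- The defining relations of the affine Temperley–Lieb algebra `aTL_N(m)`:
`u` is invertible, `e_j² = m e_j`, `e_j e_{j±1} e_j = e_j`, distant `e`'s commute,
`u e_j u⁻¹ = e_{j+1}`, and `u² e_{N−1} = e_1 ⋯ e_{N−1}` (indices in `ℤ/Nℤ`,
so `e_{N−1} = e (−1)`). -/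
structure AffineTLRel (A : Type*) [Ring A] [Algebra ℂ A] (N : ℕ)
    (m : ℂ) (u uinv : A) (e : ZMod N → A) : Prop where
  mul_uinv : u * uinv = 1
  uinv_mul : uinv * u = 1
  esq : ∀ j, e j * e j = m • e j
  eje : ∀ j, e j * e (j + 1) * e j = e j
  eje' : ∀ j, e (j + 1) * e j * e (j + 1) = e (j + 1)
  ecomm : ∀ j l, j ≠ l → j ≠ l + 1 → l ≠ j + 1 → e j * e l = e l * e j
  uconj : ∀ j, u * e j * uinv = e (j + 1)
  utwist : u * u * e (-1) =
    ((List.range (N - 1)).map (fun t => e ((t + 1 : ℕ) : ZMod N))).prod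

/-- In the affine Temperley–Lieb algebra `aTL_{N₁+N₂}(m)` with `m = q + q⁻¹`, the images
`u⁽¹⁾ = u g_{N−1}⁻¹ ⋯ g_{N₁}⁻¹` and `u⁽²⁾ = g_{N₁} ⋯ g_1 u` of the two translation
generators (with `N = N₁ + N₂` and `g_i = i(q^{1/2}·1 − q^{-1/2} e_i)`,
`g_i⁻¹ = −i(q^{-1/2}·1 − q^{1/2} e_i)`) commute: `u⁽¹⁾ u⁽²⁾ = u⁽²⁾ u⁽¹⁾`. -/
theorem atl_translation_images_commute (A : Type*) [Ring A] [Algebra ℂ A]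
    (N₁ N₂ : ℕ) (h1 : 1 ≤ N₁) (h2 : 1 ≤ N₂)
    (q sq : ℂ) (hq : q ≠ 0) (hq2 : q ^ 2 ≠ -1) (hsq : sq * sq = q)
    (u uinv : A) (e : ZMod (N₁ + N₂) → A)
    (hrel : AffineTLRel A (N₁ + N₂) (q + q⁻¹) u uinv e) :
    let g : ZMod (N₁ + N₂) → A := fun j => Complex.I • (sq • (1 : A) - sq⁻¹ • e j)
    let ginv : ZMod (N₁ + N₂) → A :=
      fun j => (-Complex.I) • (sq⁻¹ • (1 : A) - sq • e j)
    let u1 : A := u *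
      ((List.range N₂).map (fun t => ginv ((N₁ + N₂ - 1 - t : ℕ) : ZMod (N₁ + N₂)))).prod
    let u2 : A :=
      ((List.range N₁).map (fun t => g ((N₁ - t : ℕ) : ZMod (N₁ + N₂)))).prod * u
    u1 * u2 = u2 * u1 := by

  obtain ⟨m1, rfl⟩ : ∃ m, N₁ = m + 1 := ⟨N₁ - 1, by omega⟩
  obtain ⟨m2, rfl⟩ : ∃ m, N₂ = m + 1 := ⟨N₂ - 1, by omega⟩
  intro g ginv u1 u2
  obtain ⟨hmu, hum, hesq, -, -, hecomm, huconj, -⟩ := hrel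
  have hsq0 : sq ≠ 0 := by rintro rfl; simp at hsq; exact hq hsq.symm
  have hI : Complex.I * -Complex.I = 1 := by rw [mul_neg, Complex.I_mul_I]; ring
  have hI' : -Complex.I * Complex.I = 1 := by rw [neg_mul, Complex.I_mul_I]; ring
  -- shift relations
  have hue : ∀ j, u * e j = e (j + 1) * u := by
    intro j
    calc u * e j = u * e j * (uinv * u) := by rw [hum, mul_one]
      _ = (u * e j * uinv) * u := by rw [mul_assoc (u * e j)]
      _ = e (j + 1) * u := by rw [huconj]
  have hug : ∀ j, u * g j = g (j + 1) * u := by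
    intro j
    simp only [g, mul_smul_comm, smul_mul_assoc, mul_sub, sub_mul, smul_sub,
      mul_one, one_mul, hue j]
  have hugi : ∀ j, u * ginv j = ginv (j + 1) * u := by
    intro j
    simp only [ginv, mul_smul_comm, smul_mul_assoc, mul_sub, sub_mul, smul_sub,
      mul_one, one_mul, hue j]
  -- invertibility of g
  have hgg : ∀ j, g j * ginv j = 1 := by
    intro j
    simp only [g, ginv]
    rw [smul_mul_smul_comm, hI, one_smul, sub_mul, mul_sub, mul_sub,
      smul_mul_smul_comm, smul_mul_smul_comm, smul_mul_smul_comm, smul_mul_smul_comm,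
      hesq j]
    simp only [one_mul, mul_one]
    match_scalars <;> field_simp
    ring_nf
    linear_combination (1 - q * (sq * sq)) * hsq
  have hgig : ∀ j, ginv j * g j = 1 := by
    intro j
    simp only [g, ginv]
    rw [smul_mul_smul_comm, hI', one_smul, sub_mul, mul_sub, mul_sub,
      smul_mul_smul_comm, smul_mul_smul_comm, smul_mul_smul_comm, smul_mul_smul_comm,
      hesq j]
    simp only [one_mul, mul_one]
    match_scalars <;> field_simp
    ring_nf
    linear_combination (1 - q * (sq * sq)) * hsq
  -- distant commutation for g, ginv
  have hcomm : ∀ j l : ZMod (m1 + 1 + (m2 + 1)), j ≠ l → j ≠ l + 1 → l ≠ j + 1 →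
      ginv j * g l = g l * ginv j := by
    intro j l hjl hjl1 hlj1
    have hc : Commute (e j) (e l) := hecomm j l hjl hjl1 hlj1
    have A1 : Commute (sq⁻¹ • (1 : A)) (sq • (1 : A) - sq⁻¹ • e l) :=
      (Commute.one_left _).smul_left sq⁻¹
    have A2 : Commute (sq • e j) (sq • (1 : A) - sq⁻¹ • e l) :=
      (((Commute.one_right (e j)).smul_right sq).sub_right (hc.smul_right sq⁻¹)).smul_left sq
    exact ((A1.sub_left A2).smul_left (-Complex.I)).smul_right Complex.I
  -- injectivity of small nat casts
  have hne : ∀ a b : ℕ, a < m1 + 1 + (m2 + 1) → b < m1 + 1 + (m2 + 1) → a ≠ b →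
      ((a : ℕ) : ZMod (m1 + 1 + (m2 + 1))) ≠ ((b : ℕ) : ZMod (m1 + 1 + (m2 + 1))) := by
    intro a b ha hb hab h
    rw [ZMod.natCast_eq_natCast_iff] at h
    exact hab (by simpa [Nat.ModEq, Nat.mod_eq_of_lt ha, Nat.mod_eq_of_lt hb] using h)
  have hcast : ∀ a : ℕ, ((a + 1 : ℕ) : ZMod (m1 + 1 + (m2 + 1)))
      = ((a : ℕ) : ZMod (m1 + 1 + (m2 + 1))) + 1 := by intro a; push_cast; ring
  have hneg : ((m1 + 1 + (m2 + 1) - 1 : ℕ) : ZMod (m1 + 1 + (m2 + 1))) = -1 := by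
    have h0 : ((m1 + 1 + (m2 + 1) : ℕ) : ZMod (m1 + 1 + (m2 + 1))) = 0 := ZMod.natCast_self _
    rw [show m1 + 1 + (m2 + 1) - 1 = m1 + m2 + 1 from by omega]
    push_cast at h0 ⊢
    linear_combination h0
  -- expose the products
  show u * ((List.range (m2 + 1)).map
        (fun t => ginv ((m1 + 1 + (m2 + 1) - 1 - t : ℕ) : ZMod (m1 + 1 + (m2 + 1))))).prod *
      (((List.range (m1 + 1)).map
        (fun t => g ((m1 + 1 - t : ℕ) : ZMod (m1 + 1 + (m2 + 1))))).prod * u)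
    = ((List.range (m1 + 1)).map
        (fun t => g ((m1 + 1 - t : ℕ) : ZMod (m1 + 1 + (m2 + 1))))).prod * u *
      (u * ((List.range (m2 + 1)).map
        (fun t => ginv ((m1 + 1 + (m2 + 1) - 1 - t : ℕ) : ZMod (m1 + 1 + (m2 + 1))))).prod)
  set P1 : A := ((List.range (m2 + 1)).map
      (fun t => ginv ((m1 + 1 + (m2 + 1) - 1 - t : ℕ) : ZMod (m1 + 1 + (m2 + 1))))).prod with hP1
  set P2 : A := ((List.range (m1 + 1)).map
      (fun t => g ((m1 + 1 - t : ℕ) : ZMod (m1 + 1 + (m2 + 1))))).prod with hP2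
  set Q1 : A := ((List.range m2).map
      (fun t => ginv ((m1 + 1 + (m2 + 1) - 1 - t : ℕ) : ZMod (m1 + 1 + (m2 + 1))))).prod with hQ1
  set Q1m : A := ((List.range m2).map
      (fun t => ginv ((m1 + m2 - t : ℕ) : ZMod (m1 + 1 + (m2 + 1))))).prod with hQ1m
  set P2m : A := ((List.range (m1 + 1)).map
      (fun t => g ((m1 - t : ℕ) : ZMod (m1 + 1 + (m2 + 1))))).prod with hP2m
  set P2a : A := ((List.range m1).map
      (fun t => g ((m1 - t : ℕ) : ZMod (m1 + 1 + (m2 + 1))))).prod with hP2a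
  set P2b : A := ((List.range m1).map
      (fun t => g ((m1 - 1 - t : ℕ) : ZMod (m1 + 1 + (m2 + 1))))).prod with hP2b
  -- shift lemmas for the chains
  have hshift2 : P2 * u = u * P2m := by
    rw [hP2, hP2m]
    refine aTL_shift u (m1 + 1) _ _ ?_
    intro t ht
    rw [show m1 + 1 - t = (m1 - t) + 1 from by omega, hcast]
    exact (hug _).symm
  have hshiftQ1 : Q1 * u = u * Q1m := by
    rw [hQ1, hQ1m]
    refine aTL_shift u m2 _ _ ?_
    intro t ht
    rw [show m1 + 1 + (m2 + 1) - 1 - t = (m1 + m2 - t) + 1 from by omega, hcast]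
    exact (hugi _).symm
  have hshiftP2a : P2a * u = u * P2b := by
    rw [hP2a, hP2b]
    refine aTL_shift u m1 _ _ ?_
    intro t ht
    rw [show m1 - t = (m1 - 1 - t) + 1 from by omega, hcast]
    exact (hug _).symm
  -- splitting lemmas
  have hsplitP1 : P1 = Q1 * ginv ((m1 + 1 : ℕ) : ZMod (m1 + 1 + (m2 + 1))) := by
    have h := aTL_split_last m2
      (fun t => ginv ((m1 + 1 + (m2 + 1) - 1 - t : ℕ) : ZMod (m1 + 1 + (m2 + 1))))
    rw [hP1, hQ1, h, show m1 + 1 + (m2 + 1) - 1 - m2 = m1 + 1 from by omega]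
  have hsplitP1' : P1 = ginv (-1) * Q1m := by
    have h := aTL_split_first m2
      (fun t => ginv ((m1 + 1 + (m2 + 1) - 1 - t : ℕ) : ZMod (m1 + 1 + (m2 + 1))))
    rw [hP1, hQ1m, h, Nat.sub_zero, hneg]
    congr 1
    exact aTL_prod_congr m2 _ _
      (fun t ht => by rw [show m1 + 1 + (m2 + 1) - 1 - (t + 1) = m1 + m2 - t from by omega])
  have hsplitP2m : P2m = g ((m1 : ℕ) : ZMod (m1 + 1 + (m2 + 1))) * P2b := by
    have h := aTL_split_first m1
      (fun t => g ((m1 - t : ℕ) : ZMod (m1 + 1 + (m2 + 1))))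
    rw [hP2m, hP2b, h, Nat.sub_zero]
    congr 1
    exact aTL_prod_congr m1 _ _
      (fun t ht => by rw [show m1 - (t + 1) = m1 - 1 - t from by omega])
  have hsplitP2m' : P2m = P2a * g 0 := by
    have h := aTL_split_last m1
      (fun t => g ((m1 - t : ℕ) : ZMod (m1 + 1 + (m2 + 1))))
    rw [hP2m, hP2a, h, show m1 - m1 = 0 from by omega, Nat.cast_zero]
  -- assoc'd pointwise relations
  have hsg' : ∀ x : A, ginv ((m1 + 1 : ℕ) : ZMod (m1 + 1 + (m2 + 1))) * (u * x)
      = u * (ginv ((m1 : ℕ) : ZMod (m1 + 1 + (m2 + 1))) * x) := by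
    intro x
    rw [← mul_assoc, ← mul_assoc, hcast m1, ← hugi]
  have hjun1' : ∀ x : A, ginv ((m1 : ℕ) : ZMod (m1 + 1 + (m2 + 1))) *
      (g ((m1 : ℕ) : ZMod (m1 + 1 + (m2 + 1))) * x) = x := by
    intro x
    rw [← mul_assoc, hgig, one_mul]
  have hg0' : ∀ x : A, g (0 : ZMod (m1 + 1 + (m2 + 1))) * (u * x)
      = u * (g (-1 : ZMod (m1 + 1 + (m2 + 1))) * x) := by
    intro x
    have h := hug (-1 : ZMod (m1 + 1 + (m2 + 1)))
    rw [neg_add_cancel] at h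
    rw [← mul_assoc, ← mul_assoc, ← h]
  have hjun2' : ∀ x : A, g (-1 : ZMod (m1 + 1 + (m2 + 1))) *
      (ginv (-1 : ZMod (m1 + 1 + (m2 + 1))) * x) = x := by
    intro x
    rw [← mul_assoc, hgg, one_mul]
  -- the commuting chains
  have hchains : P2b * Q1m = Q1m * P2b := by
    rw [hP2b, hQ1m]
    refine (aTL_comm_chains m2 m1 _ _ ?_).symm
    intro s hs t ht
    refine hcomm _ _ ?_ ?_ ?_
    · exact hne _ _ (by omega) (by omega) (by omega)
    · rw [← hcast (m1 - 1 - t)]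
      exact hne _ _ (by omega) (by omega) (by omega)
    · rw [← hcast (m1 + m2 - s)]
      exact hne _ _ (by omega) (by omega) (by omega)
  -- the central claim
  have claim : P1 * (u * P2m) = P2m * (u * P1) := by
    have lhs : P1 * (u * P2m) = u * (Q1m * P2b) := by
      calc P1 * (u * P2m)
          = Q1 * (ginv ((m1 + 1 : ℕ) : ZMod (m1 + 1 + (m2 + 1))) * (u * P2m)) := by
            rw [hsplitP1, mul_assoc]
        _ = Q1 * (u * (ginv ((m1 : ℕ) : ZMod (m1 + 1 + (m2 + 1))) * P2m)) := by rw [hsg']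
        _ = Q1 * (u * (ginv ((m1 : ℕ) : ZMod (m1 + 1 + (m2 + 1))) *
              (g ((m1 : ℕ) : ZMod (m1 + 1 + (m2 + 1))) * P2b))) := by rw [hsplitP2m]
        _ = Q1 * (u * P2b) := by rw [hjun1']
        _ = u * (Q1m * P2b) := by rw [← mul_assoc, hshiftQ1, mul_assoc]
    have rhs : P2m * (u * P1) = u * (Q1m * P2b) := by
      calc P2m * (u * P1)
          = P2a * (g 0 * (u * P1)) := by rw [hsplitP2m', mul_assoc]
        _ = P2a * (u * (g (-1) * P1)) := by rw [hg0']
        _ = P2a * (u * (g (-1) * (ginv (-1) * Q1m))) := by rw [hsplitP1']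
        _ = P2a * (u * Q1m) := by rw [hjun2']
        _ = u * (P2b * Q1m) := by rw [← mul_assoc, hshiftP2a, mul_assoc]
        _ = u * (Q1m * P2b) := by rw [hchains]
    rw [lhs, rhs]
  calc u * P1 * (P2 * u)
      = u * (P1 * (u * P2m)) := by rw [hshift2, mul_assoc]
    _ = u * (P2m * (u * P1)) := by rw [claim]
    _ = P2 * u * (u * P1) := by rw [← mul_assoc, ← hshift2]
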